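/- In the setting below, the map sending w = u + vτ (with u, v ∈ ℤ) to the pair (u, v) is a well-defined injection from the set counted by N_ω(q, t) into the set counted by M(q, kt); in particular N_ω(q, t) ≤ M(q, kt) for every positive real t and every positive integer q all of whose prime factors lie in P. -/

import Mathlib

open NumberField
open scoped TensorProduct

instance (p : Nat.Primes) : Fact (p : ℕ).Prime := ⟨p.2⟩

variable (K : IntermediateField ℚ ℂ) [NumberField ↥K]

/-- `O_p = O ⊗_ℤ ℤ_p`. -/
abbrev Op (p : Nat.Primes) : Type _ := (𝓞 ↥K) ⊗[ℤ] ℤ_[(p : ℕ)]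

/-- The natural map `O → O_p`. -/
noncomputable def incL (p : Nat.Primes) : 𝓞 ↥K →+* Op K p :=
  (Algebra.TensorProduct.includeLeft :
    𝓞 ↥K →ₐ[ℤ] (𝓞 ↥K) ⊗[ℤ] ℤ_[(p : ℕ)]).toRingHom

/-- The natural map `ℤ_p → O_p`. -/
noncomputable def incR (p : Nat.Primes) : ℤ_[(p : ℕ)] →+* Op K p :=
  (Algebra.TensorProduct.includeRight :
    ℤ_[(p : ℕ)] →ₐ[ℤ] (𝓞 ↥K) ⊗[ℤ] ℤ_[(p : ℕ)]).toRingHom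

/-- `ℤ_pˣ` regarded as a subgroup of `O_pˣ`. -/
noncomputable def ZpUnits (p : Nat.Primes) : Subgroup (Op K p)ˣ :=
  (Units.map (incR K p).toMonoidHom).range

/-- `H_p = {a ∈ O_pˣ : a^m ∈ ℤ_pˣ for some positive integer m}`. -/
noncomputable def Hp (p : Nat.Primes) : Set (Op K p)ˣ :=
  {a : (Op K p)ˣ | ∃ m : ℕ, 0 < m ∧ a ^ m ∈ ZpUnits K p}

/-- The set counted by `N_ω(q, t)`: elements `w ∈ O` with
`w ≡ η_p ω_p x_p (mod q O_p)` for some `η_p ∈ ℤ_pˣ` (for every `p ∈ P`, where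
`y p = ω_p x_p`), with `w^h w₀ O ≠ conj(w^h w₀) O`, and `|w| ≤ t`. -/
noncomputable def NSet (P : Finset Nat.Primes) (h : ℕ) (w₀ : 𝓞 ↥K)
    (σ : 𝓞 ↥K ≃+* 𝓞 ↥K) (y : (p : Nat.Primes) → (Op K p)ˣ)
    (q : ℕ) (t : ℝ) : Set (𝓞 ↥K) :=
  {w : 𝓞 ↥K |
    (∀ p ∈ P, ∃ η : ℤ_[(p : ℕ)]ˣ,
      (q : Op K p) ∣
        (incL K p w - ((Units.map (incR K p).toMonoidHom η * y p : (Op K p)ˣ) : Op K p))) ∧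
    Ideal.span {w ^ h * w₀} ≠ Ideal.span {σ (w ^ h * w₀)} ∧
    ‖((w : ↥K) : ℂ)‖ ≤ t}

/-- `N_ω(q, t)`, the cardinality of `NSet`. -/
noncomputable def Ncount (P : Finset Nat.Primes) (h : ℕ) (w₀ : 𝓞 ↥K)
    (σ : 𝓞 ↥K ≃+* 𝓞 ↥K) (y : (p : Nat.Primes) → (Op K p)ˣ)
    (q : ℕ) (t : ℝ) : ℕ :=
  (NSet K P h w₀ σ y q t).ncard

/-- The set counted by `M(q, t)`: pairs of rational integers `(u, v)` with
`uβ_p − vα_p ∈ qℤ_p` and `uβ_p − vα_p ≠ 0` for every `p ∈ P`, and `|u|, |v| ≤ t`. -/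
def MSet (P : Finset Nat.Primes) (α β : (p : Nat.Primes) → ℤ_[(p : ℕ)])
    (q : ℕ) (t : ℝ) : Set (ℤ × ℤ) :=
  {uv : ℤ × ℤ |
    (∀ p ∈ P, (q : ℤ_[(p : ℕ)]) ∣
      ((uv.1 : ℤ_[(p : ℕ)]) * β p - (uv.2 : ℤ_[(p : ℕ)]) * α p)) ∧
    (∀ p ∈ P, (uv.1 : ℤ_[(p : ℕ)]) * β p - (uv.2 : ℤ_[(p : ℕ)]) * α p ≠ 0) ∧
    (|uv.1| : ℝ) ≤ t ∧ (|uv.2| : ℝ) ≤ t}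

/-- `M(q, t)`, the cardinality of `MSet`. -/
noncomputable def Mcount (P : Finset Nat.Primes) (α β : (p : Nat.Primes) → ℤ_[(p : ℕ)])
    (q : ℕ) (t : ℝ) : ℕ :=
  (MSet P α β q t).ncard

set_option maxHeartbeats 4000000
set_option synthInstance.maxHeartbeats 400000
set_option linter.unusedSectionVars false

open UniqueFactorizationMonoid in
theorem myPowInj {R : Type*} [CommRing R] [IsDomain R] [IsDedekindDomain R] {I J : Ideal R} {n : ℕ}
    (hn : n ≠ 0) (h : I ^ n = J ^ n) : I = J := by
  classical
  by_cases hI : I = 0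
  · subst hI
    rw [eq_comm, zero_pow hn, pow_eq_zero_iff hn] at h
    exact h.symm
  by_cases hJ : J = 0
  · subst hJ; rw [zero_pow hn, pow_eq_zero_iff hn] at h; exact h
  have h1 := congrArg normalizedFactors h
  rw [normalizedFactors_pow, normalizedFactors_pow] at h1
  have h2 : normalizedFactors I = normalizedFactors J := by
    refine Multiset.ext.mpr fun a => ?_
    have := congrArg (Multiset.count a) h1
    simp only [Multiset.count_nsmul] at this
    exact Nat.eq_of_mul_eq_mul_left (Nat.pos_of_ne_zero hn) this
  exact associated_iff_eq.mp
    ((prod_normalizedFactors hI).symm.trans (h2 ▸ prod_normalizedFactors hJ))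

section Aux

variable (τ : 𝓞 ↥K)
variable (hτ : ∀ z : 𝓞 ↥K, ∃! cd : ℤ × ℤ, z = (cd.1 : 𝓞 ↥K) + (cd.2 : 𝓞 ↥K) * τ)

/-- coordinates of `z` in the basis `{1, τ}` -/
noncomputable def crd (z : 𝓞 ↥K) : ℤ × ℤ := (hτ z).choose

lemma crd_spec (z : 𝓞 ↥K) :
    z = ((crd K τ hτ z).1 : 𝓞 ↥K) + ((crd K τ hτ z).2 : 𝓞 ↥K) * τ := (hτ z).choose_spec.1

lemma crd_unique {z : 𝓞 ↥K} {cd : ℤ × ℤ}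
    (h : z = (cd.1 : 𝓞 ↥K) + (cd.2 : 𝓞 ↥K) * τ) : cd = crd K τ hτ z :=
  (hτ z).choose_spec.2 cd h

lemma crd_add (z z' : 𝓞 ↥K) : crd K τ hτ (z + z') = crd K τ hτ z + crd K τ hτ z' := by
  refine (crd_unique K τ hτ ?_).symm
  have h1 := crd_spec K τ hτ z
  have h2 := crd_spec K τ hτ z'
  simp only [Prod.fst_add, Prod.snd_add]
  push_cast
  linear_combination h1 + h2

lemma crd_mul_int (m : ℤ) (z : 𝓞 ↥K) :
    crd K τ hτ ((m : 𝓞 ↥K) * z) = (m * (crd K τ hτ z).1, m * (crd K τ hτ z).2) := by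
  refine (crd_unique K τ hτ ?_).symm
  have h1 := crd_spec K τ hτ z
  push_cast
  linear_combination (m : 𝓞 ↥K) * h1

lemma crd_one : crd K τ hτ 1 = (1, 0) :=
  (crd_unique K τ hτ (by norm_num)).symm

lemma crd_tau : crd K τ hτ τ = (0, 1) :=
  (crd_unique K τ hτ (by norm_num)).symm

/-- The coordinate map `O_p → ℤ_p × ℤ_p` w.r.t. the basis `{1 ⊗ 1, τ ⊗ 1}`. -/
noncomputable def FF (p : Nat.Primes) : Op K p →+ ℤ_[(p : ℕ)] × ℤ_[(p : ℕ)] :=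
  TensorProduct.liftAddHom
    (AddMonoidHom.mk'
      (fun z => AddMonoidHom.mk'
        (fun c => (c * ((crd K τ hτ z).1 : ℤ_[(p : ℕ)]), c * ((crd K τ hτ z).2 : ℤ_[(p : ℕ)])))
        (fun c c' => by simp only [Prod.mk_add_mk, Prod.mk.injEq]; constructor <;> ring))
      (fun z z' => by
        refine AddMonoidHom.ext fun c => ?_
        simp only [AddMonoidHom.mk'_apply, AddMonoidHom.add_apply, crd_add, Prod.fst_add,
          Prod.snd_add, Prod.mk_add_mk, Prod.mk.injEq]
        push_cast
        constructor <;> ring))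
    (fun m z c => by
      simp only [AddMonoidHom.mk'_apply, zsmul_eq_mul, crd_mul_int, Prod.mk.injEq]
      push_cast
      constructor <;> ring)

lemma FF_tmul (p : Nat.Primes) (z : 𝓞 ↥K) (c : ℤ_[(p : ℕ)]) :
    FF K τ hτ p (z ⊗ₜ[ℤ] c)
      = (c * ((crd K τ hτ z).1 : ℤ_[(p : ℕ)]), c * ((crd K τ hτ z).2 : ℤ_[(p : ℕ)])) :=
  TensorProduct.liftAddHom_tmul _ _ _ _

lemma FF_rep (p : Nat.Primes) (a b : ℤ_[(p : ℕ)]) :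
    FF K τ hτ p (incR K p a + incR K p b * incL K p τ) = (a, b) := by
  have h1 : incR K p a = (1 : 𝓞 ↥K) ⊗ₜ[ℤ] a := rfl
  have h2 : incR K p b * incL K p τ = τ ⊗ₜ[ℤ] b := by
    show ((1 : 𝓞 ↥K) ⊗ₜ[ℤ] b) * (τ ⊗ₜ[ℤ] (1 : ℤ_[(p : ℕ)])) = _
    rw [Algebra.TensorProduct.tmul_mul_tmul, one_mul, mul_one]
  rw [h1, h2, map_add, FF_tmul, FF_tmul, crd_one, crd_tau]
  simp

include hτ in
lemma rep_inj (p : Nat.Primes) {a b a' b' : ℤ_[(p : ℕ)]}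
    (h : incR K p a + incR K p b * incL K p τ = incR K p a' + incR K p b' * incL K p τ) :
    a = a' ∧ b = b' := by
  have := congrArg (FF K τ hτ p) h
  rw [FF_rep, FF_rep] at this
  exact ⟨congrArg Prod.fst this, congrArg Prod.snd this⟩

include hτ in
lemma rep_dvd (p : Nat.Primes) {a b : ℤ_[(p : ℕ)]} {q : ℕ}
    (h : (q : Op K p) ∣ incR K p a + incR K p b * incL K p τ) :
    (q : ℤ_[(p : ℕ)]) ∣ a ∧ (q : ℤ_[(p : ℕ)]) ∣ b := by
  obtain ⟨e, he⟩ := h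
  have h2 : incR K p a + incR K p b * incL K p τ = q • e := by
    rw [he, nsmul_eq_mul]
  have h3 := congrArg (FF K τ hτ p) h2
  rw [FF_rep, map_nsmul] at h3
  refine ⟨⟨(FF K τ hτ p e).1, ?_⟩, ⟨(FF K τ hτ p e).2, ?_⟩⟩
  · have := congrArg Prod.fst h3
    simpa [nsmul_eq_mul] using this
  · have := congrArg Prod.snd h3
    simpa [nsmul_eq_mul] using this

lemma incL_rep (p : Nat.Primes) (w : 𝓞 ↥K) :
    incL K p w = incR K p ((crd K τ hτ w).1 : ℤ_[(p : ℕ)])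
      + incR K p ((crd K τ hτ w).2 : ℤ_[(p : ℕ)]) * incL K p τ := by
  conv_lhs => rw [crd_spec K τ hτ w]
  simp only [map_add, map_mul, map_intCast]

lemma incL_int_comb (p : Nat.Primes) (u v : ℤ) :
    incL K p ((u : 𝓞 ↥K) + (v : 𝓞 ↥K) * τ)
      = incR K p (u : ℤ_[(p : ℕ)]) + incR K p (v : ℤ_[(p : ℕ)]) * incL K p τ := by
  simp only [map_add, map_mul, map_intCast]

end Aux

section HpLemmas

variable {K}

lemma Hp_mul {p : Nat.Primes} {a b : (Op K p)ˣ} (ha : a ∈ Hp K p) (hb : b ∈ Hp K p) :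
    a * b ∈ Hp K p := by
  obtain ⟨m, hm, hma⟩ := ha
  obtain ⟨n, hn, hnb⟩ := hb
  refine ⟨m * n, Nat.mul_pos hm hn, ?_⟩
  have : (a * b) ^ (m * n) = (a ^ m) ^ n * (b ^ n) ^ m := by
    rw [mul_pow a b (m * n), ← pow_mul, ← pow_mul, mul_comm n m]
  rw [this]
  exact Subgroup.mul_mem _ (Subgroup.pow_mem _ hma n) (Subgroup.pow_mem _ hnb m)

lemma Hp_pow {p : Nat.Primes} {a : (Op K p)ˣ} (ha : a ∈ Hp K p) (n : ℕ) :
    a ^ n ∈ Hp K p := by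
  obtain ⟨m, hm, hma⟩ := ha
  refine ⟨m, hm, ?_⟩
  have : (a ^ n) ^ m = (a ^ m) ^ n := by rw [← pow_mul, ← pow_mul, mul_comm]
  rw [this]
  exact Subgroup.pow_mem _ hma n

end HpLemmas
/-- In the anticyclotomic setting, writing `ω_p x_p = α_p + β_p (τ⊗1)`,
the map `w = u + vτ ↦ (u, v)` is a well-defined injection from the set counted by
`N_ω(q, t)` into the set counted by `M(q, kt)`; in particular
`N_ω(q, t) ≤ M(q, kt)`. -/
theorem NSet_maps_into_MSet
    (hdeg : Module.finrank ℚ ↥K = 2) (himag : ∃ z : ↥K, (z : ℂ).im ≠ 0)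
    (σ : 𝓞 ↥K ≃+* 𝓞 ↥K)
    (hσ : ∀ z : 𝓞 ↥K, ((σ z : ↥K) : ℂ) = starRingEnd ℂ ((z : ↥K) : ℂ))
    (h : ℕ) (hclass : h = NumberField.classNumber ↥K)
    -- `{1, τ}` is a `ℤ`-basis of `O`
    (τ : 𝓞 ↥K) (hτ : ∀ z : 𝓞 ↥K, ∃! cd : ℤ × ℤ, z = (cd.1 : 𝓞 ↥K) + (cd.2 : 𝓞 ↥K) * τ)
    (P : Finset Nat.Primes)
    (w₀ : 𝓞 ↥K) (hw₀ : w₀ ≠ 0)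
    -- the image of `w₀` in `O_p` is a unit, for each `p ∈ P`
    (u₀ : (p : Nat.Primes) → (Op K p)ˣ) (hu₀ : ∀ p ∈ P, ((u₀ p : Op K p)) = incL K p w₀)
    -- `x p ∈ S_p` (in particular `S_p` is nonempty), for each `p ∈ P`
    (x : (p : Nat.Primes) → (Op K p)ˣ) (hx : ∀ p ∈ P, (x p) ^ h * u₀ p ∈ Hp K p)
    -- `Ω p` is a finite set of representatives for the cosets `H_p / ℤ_pˣ`
    (Ω : (p : Nat.Primes) → Set (Op K p)ˣ)
    (hΩfin : ∀ p ∈ P, (Ω p).Finite)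
    (hΩsub : ∀ p ∈ P, Ω p ⊆ Hp K p)
    (hΩrep : ∀ p ∈ P, ∀ a ∈ Hp K p,
      ∃! ωr : (Op K p)ˣ, ωr ∈ Ω p ∧ ∃ η ∈ ZpUnits K p, a = η * ωr)
    (ω : (p : Nat.Primes) → (Op K p)ˣ) (hω : ∀ p ∈ P, ω p ∈ Ω p)
    -- the coordinates of `ω_p x_p` in the basis `{1 ⊗ 1, τ ⊗ 1}` of `O_p` over `ℤ_p`
    (α β : (p : Nat.Primes) → ℤ_[(p : ℕ)])
    (hαβ : ∀ p ∈ P, ((ω p * x p : (Op K p)ˣ) : Op K p)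
      = incR K p (α p) + incR K p (β p) * incL K p τ)
    -- `k` is a norm-comparison constant for the basis `{1, τ}`
    (k : ℝ) (hk₀ : 0 < k)
    (hk : ∀ a b : ℝ, max |a| |b| ≤ k * ‖(a + ((τ : ↥K) : ℂ) * b : ℂ)‖) :
    ∀ (q : ℕ) (t : ℝ), 0 < q → (∀ l : Nat.Primes, (l : ℕ) ∣ q → l ∈ P) → 0 < t →
      (∀ u v : ℤ,
        ((u : 𝓞 ↥K) + (v : 𝓞 ↥K) * τ) ∈ NSet K P h w₀ σ (fun p => ω p * x p) q t →
          (u, v) ∈ MSet P α β q (k * t)) ∧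
      Ncount K P h w₀ σ (fun p => ω p * x p) q t ≤ Mcount P α β q (k * t) := by

  intro q t hq hqP ht
  have hh : 0 < h := by rw [hclass, NumberField.classNumber]; exact Fintype.card_pos
  have main : ∀ u v : ℤ,
      ((u : 𝓞 ↥K) + (v : 𝓞 ↥K) * τ) ∈ NSet K P h w₀ σ (fun p => ω p * x p) q t →
        (u, v) ∈ MSet P α β q (k * t) := by
    intro u v hw
    obtain ⟨w, hwdef⟩ : ∃ w : 𝓞 ↥K, ((u : 𝓞 ↥K) + (v : 𝓞 ↥K) * τ) = w := ⟨_, rfl⟩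
    rw [hwdef] at hw
    obtain ⟨hcong, hideal, habs⟩ := hw
    have key : ∀ p ∈ P, ∃ η : ℤ_[(p : ℕ)]ˣ,
        (q : ℤ_[(p : ℕ)]) ∣ ((u : ℤ_[(p : ℕ)]) - (η : ℤ_[(p : ℕ)]) * α p) ∧
        (q : ℤ_[(p : ℕ)]) ∣ ((v : ℤ_[(p : ℕ)]) - (η : ℤ_[(p : ℕ)]) * β p) := by
      intro p hp
      obtain ⟨η, hη⟩ := hcong p hp
      refine ⟨η, ?_⟩
      have hmap : ((Units.map (incR K p).toMonoidHom η : (Op K p)ˣ) : Op K p)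
          = incR K p (η : ℤ_[(p : ℕ)]) := rfl
      have hX : ((ω p * x p : (Op K p)ˣ) : Op K p)
          = incR K p (α p) + incR K p (β p) * incL K p τ := hαβ p hp
      have heq : incL K p w
            - ((Units.map (incR K p).toMonoidHom η * (ω p * x p) : (Op K p)ˣ) : Op K p)
          = incR K p ((u : ℤ_[(p : ℕ)]) - (η : ℤ_[(p : ℕ)]) * α p)
            + incR K p ((v : ℤ_[(p : ℕ)]) - (η : ℤ_[(p : ℕ)]) * β p) * incL K p τ := by
        rw [← hwdef, incL_int_comb, Units.val_mul, hmap, hX, map_sub, map_sub, map_mul, map_mul]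
        ring
      rw [heq] at hη
      exact rep_dvd K τ hτ p hη
    refine ⟨?_, ?_, ?_, ?_⟩
    · -- divisibility
      intro p hp
      obtain ⟨η, h1, h2⟩ := key p hp
      have : (u : ℤ_[(p : ℕ)]) * β p - (v : ℤ_[(p : ℕ)]) * α p
          = ((u : ℤ_[(p : ℕ)]) - (η : ℤ_[(p : ℕ)]) * α p) * β p
            - ((v : ℤ_[(p : ℕ)]) - (η : ℤ_[(p : ℕ)]) * β p) * α p := by ring
      rw [this]
      exact dvd_sub (h1.mul_right _) (h2.mul_right _)
    · -- nonvanishing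
      intro p hp hzero
      have hzero' : (u : ℤ_[(p : ℕ)]) * β p = (v : ℤ_[(p : ℕ)]) * α p := by
        linear_combination hzero
      have hX : ((ω p * x p : (Op K p)ˣ) : Op K p)
          = incR K p (α p) + incR K p (β p) * incL K p τ := hαβ p hp
      -- the element c = (ωx)^h u₀ lies in H_p
      have hcH : (ω p * x p) ^ h * u₀ p ∈ Hp K p := by
        have e : (ω p * x p) ^ h * u₀ p = (ω p) ^ h * ((x p) ^ h * u₀ p) := by
          rw [mul_pow (ω p) (x p) h, mul_assoc]
        rw [e]
        exact Hp_mul (Hp_pow (hΩsub p hp (hω p hp)) h) (hx p hp)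
      obtain ⟨n, hn, hζ⟩ := hcH
      obtain ⟨ζu, hζu⟩ := hζ
      have hζv : incR K p (ζu : ℤ_[(p : ℕ)])
          = (((ω p * x p) ^ h * u₀ p : (Op K p)ˣ) : Op K p) ^ n := by
        have := congrArg (Units.val) hζu
        rw [Units.val_pow_eq_pow_val] at this
        exact this
      -- a proportionality relation  incL w * incR γ = incR r * (ω x)
      obtain ⟨γ, r, hγ, hrel⟩ : ∃ γ r : ℤ_[(p : ℕ)], γ ≠ 0 ∧
          incL K p w * incR K p γ = incR K p r * ((ω p * x p : (Op K p)ˣ) : Op K p) := by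
        by_cases hβ : β p = 0
        · have hα : α p ≠ 0 := by
            intro hα
            have hXz : ((ω p * x p : (Op K p)ˣ) : Op K p)
                = incR K p 0 + incR K p 0 * incL K p τ := by
              rw [hX, hα, hβ]
            have h10 : incR K p 1 + incR K p 0 * incL K p τ
                = incR K p 0 + incR K p 0 * incL K p τ := by
              have e1 : (((ω p * x p)⁻¹ : (Op K p)ˣ) : Op K p)
                  * ((ω p * x p : (Op K p)ˣ) : Op K p) = 1 := by
                rw [← Units.val_mul, inv_mul_cancel, Units.val_one]
              rw [hXz] at e1
              simp only [map_zero, zero_mul, add_zero, mul_zero] at e1 ⊢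
              rw [map_one, ← e1]
            have := (rep_inj K τ hτ p h10).1
            exact one_ne_zero this
          refine ⟨α p, (u : ℤ_[(p : ℕ)]), hα, ?_⟩
          have e1 : incR K p (v : ℤ_[(p : ℕ)]) * incR K p (α p)
              = incR K p (u : ℤ_[(p : ℕ)]) * incR K p (β p) := by
            rw [← map_mul, ← map_mul, ← hzero']
          rw [← hwdef, incL_int_comb, hX]
          linear_combination incL K p τ * e1
        · refine ⟨β p, (v : ℤ_[(p : ℕ)]), hβ, ?_⟩
          have e1 : incR K p (u : ℤ_[(p : ℕ)]) * incR K p (β p)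
              = incR K p (v : ℤ_[(p : ℕ)]) * incR K p (α p) := by
            rw [← map_mul, ← map_mul, hzero']
          rw [← hwdef, incL_int_comb, hX]
          linear_combination e1
      -- raise the relation to the power h, multiply by u₀, raise to the power n
      have s1 : incL K p (w ^ h * w₀) * incR K p (γ ^ h)
          = incR K p (r ^ h) * (((ω p * x p) ^ h * u₀ p : (Op K p)ˣ) : Op K p) := by
        have e : (incL K p w * incR K p γ) ^ h
            = (incR K p r * ((ω p * x p : (Op K p)ˣ) : Op K p)) ^ h := by rw [hrel]
        rw [mul_pow (incL K p w) (incR K p γ) h,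
          mul_pow (incR K p r) (((ω p * x p : (Op K p)ˣ) : Op K p)) h,
          ← map_pow, ← map_pow, ← map_pow] at e
        rw [Units.val_mul, Units.val_pow_eq_pow_val, map_mul, ← hu₀ p hp]
        linear_combination ((u₀ p : Op K p)) * e
      have s2 : incL K p ((w ^ h * w₀) ^ n) * incR K p (γ ^ (h * n))
          = incR K p (r ^ (h * n) * (ζu : ℤ_[(p : ℕ)])) := by
        have e : (incL K p (w ^ h * w₀) * incR K p (γ ^ h)) ^ n
            = (incR K p (r ^ h) * (((ω p * x p) ^ h * u₀ p : (Op K p)ˣ) : Op K p)) ^ n := by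
          rw [s1]
        rw [mul_pow (incL K p (w ^ h * w₀)) (incR K p (γ ^ h)) n,
          mul_pow (incR K p (r ^ h)) ((((ω p * x p) ^ h * u₀ p : (Op K p)ˣ) : Op K p)) n,
          ← map_pow, ← map_pow, ← map_pow, ← pow_mul, ← pow_mul, ← hζv, ← map_mul] at e
        exact e
      rw [incL_rep K τ hτ p ((w ^ h * w₀) ^ n)] at s2
      have s3 : incR K p (((crd K τ hτ ((w ^ h * w₀) ^ n)).1 : ℤ_[(p : ℕ)]) * γ ^ (h * n))
            + incR K p (((crd K τ hτ ((w ^ h * w₀) ^ n)).2 : ℤ_[(p : ℕ)]) * γ ^ (h * n))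
              * incL K p τ
          = incR K p (r ^ (h * n) * (ζu : ℤ_[(p : ℕ)])) + incR K p 0 * incL K p τ := by
        rw [map_mul, map_mul, map_zero]
        linear_combination s2
      have h2nd := (rep_inj K τ hτ p s3).2
      have hγn : γ ^ (h * n) ≠ 0 := pow_ne_zero _ hγ
      have hcs2 : ((crd K τ hτ ((w ^ h * w₀) ^ n)).2 : ℤ_[(p : ℕ)]) = 0 :=
        (mul_eq_zero.mp h2nd).resolve_right hγn
      have hcs2' : (crd K τ hτ ((w ^ h * w₀) ^ n)).2 = 0 := by exact_mod_cast hcs2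
      have hzint : (w ^ h * w₀) ^ n = ((crd K τ hτ ((w ^ h * w₀) ^ n)).1 : 𝓞 ↥K) := by
        conv_lhs => rw [crd_spec K τ hτ ((w ^ h * w₀) ^ n)]
        rw [hcs2']
        push_cast
        ring
      have hσz : σ ((w ^ h * w₀) ^ n) = (w ^ h * w₀) ^ n := by
        rw [hzint, map_intCast]
      have hspans : Ideal.span {w ^ h * w₀} ^ n = Ideal.span {σ (w ^ h * w₀)} ^ n := by
        rw [Ideal.span_singleton_pow, Ideal.span_singleton_pow, ← map_pow, hσz]
      exact hideal (myPowInj hn.ne' hspans)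
    · -- bound on |u|
      have hcast : ((w : ↥K) : ℂ) = ((u : ℝ) : ℂ) + ((τ : ↥K) : ℂ) * ((v : ℝ) : ℂ) := by
        have hg : ∀ z : 𝓞 ↥K, ((z : ↥K) : ℂ)
            = ((algebraMap ↥K ℂ).comp (algebraMap (𝓞 ↥K) ↥K)) z := fun z => rfl
        rw [← hwdef, hg, map_add, map_mul, map_intCast, map_intCast, ← hg τ]
        push_cast
        ring
      have hmax := hk (u : ℝ) (v : ℝ)
      rw [← hcast] at hmax
      have hfin : |(u : ℝ)| ≤ k * t :=
        le_trans (le_trans (le_max_left _ _) hmax) (mul_le_mul_of_nonneg_left habs hk₀.le)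
      simpa [Int.cast_abs] using hfin
    · -- bound on |v|
      have hcast : ((w : ↥K) : ℂ) = ((u : ℝ) : ℂ) + ((τ : ↥K) : ℂ) * ((v : ℝ) : ℂ) := by
        have hg : ∀ z : 𝓞 ↥K, ((z : ↥K) : ℂ)
            = ((algebraMap ↥K ℂ).comp (algebraMap (𝓞 ↥K) ↥K)) z := fun z => rfl
        rw [← hwdef, hg, map_add, map_mul, map_intCast, map_intCast, ← hg τ]
        push_cast
        ring
      have hmax := hk (u : ℝ) (v : ℝ)
      rw [← hcast] at hmax
      have hfin : |(v : ℝ)| ≤ k * t :=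
        le_trans (le_trans (le_max_right _ _) hmax) (mul_le_mul_of_nonneg_left habs hk₀.le)
      simpa [Int.cast_abs] using hfin
  refine ⟨main, ?_⟩
  have hfin : (MSet P α β q (k * t)).Finite := by
    apply Set.Finite.subset (Set.finite_Icc ((-⌈k * t⌉, -⌈k * t⌉) : ℤ × ℤ) (⌈k * t⌉, ⌈k * t⌉))
    rintro ⟨u, v⟩ ⟨-, -, h1, h2⟩
    have b1 : |u| ≤ ⌈k * t⌉ := by exact_mod_cast h1.trans (Int.le_ceil _)
    have b2 : |v| ≤ ⌈k * t⌉ := by exact_mod_cast h2.trans (Int.le_ceil _)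
    obtain ⟨b1l, b1r⟩ := abs_le.mp b1
    obtain ⟨b2l, b2r⟩ := abs_le.mp b2
    exact Set.mem_Icc.mpr ⟨⟨b1l, b2l⟩, ⟨b1r, b2r⟩⟩
  have hmaps : ∀ a ∈ NSet K P h w₀ σ (fun p => ω p * x p) q t,
      crd K τ hτ a ∈ MSet P α β q (k * t) := by
    intro a haN
    have hrepa := crd_spec K τ hτ a
    have hmem : (((crd K τ hτ a).1 : 𝓞 ↥K) + ((crd K τ hτ a).2 : 𝓞 ↥K) * τ)
        ∈ NSet K P h w₀ σ (fun p => ω p * x p) q t := by rw [← hrepa]; exact haN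
    have hm := main (crd K τ hτ a).1 (crd K τ hτ a).2 hmem
    rwa [Prod.mk.eta] at hm
  have hinj : Set.InjOn (fun z => crd K τ hτ z)
      (NSet K P h w₀ σ (fun p => ω p * x p) q t) := by
    intro a _ b _ hab
    have hab' : crd K τ hτ a = crd K τ hτ b := hab
    rw [crd_spec K τ hτ a, crd_spec K τ hτ b, hab']
  exact Set.ncard_le_ncard_of_injOn (fun z => crd K τ hτ z) hmaps hinj hfin
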